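/- For every 1 ≤ p < ∞, the pair (ℓ_1, ℓ_p) fails the weak minimizing property: the diagonal operator T : ℓ_1 → ℓ_p defined by T e*_n = 2^{-n} f_n (where (e*_n) and (f_n) are the canonical bases) does not attain its minimum modulus m(T) = 0, yet the sequence (e*_n) of unit vectors is a minimizing sequence for T that is not weakly null. -/

import Mathlib

open Filter Topology

noncomputable def minMod {X Y : Type*} [NormedAddCommGroup X] [NormedSpace ℝ X]
    [NormedAddCommGroup Y] [NormedSpace ℝ Y] (T : X →L[ℝ] Y) : ℝ :=
  sInf {r : ℝ | ∃ x : X, ‖x‖ = 1 ∧ ‖T x‖ = r}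

def WeaklyNull {X : Type*} [NormedAddCommGroup X] [NormedSpace ℝ X] (x : ℕ → X) : Prop :=
  ∀ f : X →L[ℝ] ℝ, Tendsto (fun n => f (x n)) atTop (𝓝 0)

def AttainsMinMod {X Y : Type*} [NormedAddCommGroup X] [NormedSpace ℝ X]
    [NormedAddCommGroup Y] [NormedSpace ℝ Y] (T : X →L[ℝ] Y) : Prop :=
  ∃ x : X, ‖x‖ = 1 ∧ ‖T x‖ = minMod T

def PairPropM (X Y : Type*) [NormedAddCommGroup X] [NormedSpace ℝ X]
    [NormedAddCommGroup Y] [NormedSpace ℝ Y] : Prop :=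
  ∀ T : X →L[ℝ] Y, 1 ≤ minMod T →
    ∀ (x : X) (y : Y), ‖x‖ ≤ ‖y‖ → ∀ xs : ℕ → X, WeaklyNull xs →
      limsup (fun n => ‖x + xs n‖) atTop ≤ limsup (fun n => ‖y + T (xs n)‖) atTop

def PairPropO (X Y : Type*) [NormedAddCommGroup X] [NormedSpace ℝ X]
    [NormedAddCommGroup Y] [NormedSpace ℝ Y] : Prop :=
  ∀ T : X →L[ℝ] Y, 1 ≤ minMod T →
    ∀ y : Y, y ≠ 0 → ∀ xs : ℕ → X, WeaklyNull xs →
      limsup (fun n => ‖xs n‖) atTop < limsup (fun n => ‖y + T (xs n)‖) atTop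

def PropertyM (X : Type*) [NormedAddCommGroup X] [NormedSpace ℝ X] : Prop :=
  ∀ x y : X, ‖y‖ ≤ ‖x‖ → ∀ xs : ℕ → X, WeaklyNull xs →
    limsup (fun n => ‖y + xs n‖) atTop ≤ limsup (fun n => ‖x + xs n‖) atTop

def OpialProperty (X : Type*) [NormedAddCommGroup X] [NormedSpace ℝ X] : Prop :=
  ∀ x : X, x ≠ 0 → ∀ xs : ℕ → X, WeaklyNull xs →
    limsup (fun n => ‖xs n‖) atTop < limsup (fun n => ‖x + xs n‖) atTop

def WeakMinimizingProperty (X Y : Type*) [NormedAddCommGroup X] [NormedSpace ℝ X]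
    [NormedAddCommGroup Y] [NormedSpace ℝ Y] : Prop :=
  ∀ T : X →L[ℝ] Y,
    (∃ xs : ℕ → X, (∀ n, ‖xs n‖ = 1) ∧
      Tendsto (fun n => ‖T (xs n)‖) atTop (𝓝 (minMod T)) ∧ ¬ WeaklyNull xs) →
    AttainsMinMod T

open scoped ENNReal

noncomputable def stdBasis (p : ℝ≥0∞) (n : ℕ) : lp (fun _ : ℕ => ℝ) p := lp.single p n 1

namespace Stmt12Aux

lemma summable_coe (x : lp (fun _ : ℕ => ℝ) 1) : Summable fun n => ‖x n‖ := by
  have := (lp.memℓp x).summable (by norm_num : (0:ℝ) < (1:ℝ≥0∞).toReal)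
  simpa using this

lemma coeff_le (a : ℝ) (n : ℕ) : ‖(1/2:ℝ)^(n+1) * a‖ ≤ ‖a‖ := by
  rw [norm_mul]
  have h2 : ‖(1/2:ℝ)^(n+1)‖ ≤ 1 := by
    rw [Real.norm_eq_abs, abs_of_nonneg (by positivity)]
    exact pow_le_one₀ (by norm_num) (by norm_num)
  calc ‖(1/2:ℝ)^(n+1)‖ * ‖a‖ ≤ 1 * ‖a‖ := by gcongr
    _ = ‖a‖ := one_mul _

lemma mem_aux (p : ℝ≥0∞) [Fact (1 ≤ p)] (x : lp (fun _ : ℕ => ℝ) 1) :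
    Memℓp (fun n => (1/2:ℝ)^(n+1) * x n) p := by
  have h1 : Memℓp (fun n => (1/2:ℝ)^(n+1) * x n) 1 := by
    apply memℓp_gen
    simp only [ENNReal.toReal_one, Real.rpow_one]
    exact (summable_coe x).of_nonneg_of_le (fun n => norm_nonneg _)
      (fun n => coeff_le (x n) n)
  exact h1.of_exponent_ge Fact.out

noncomputable def Tl (p : ℝ≥0∞) [Fact (1 ≤ p)] :
    lp (fun _ : ℕ => ℝ) 1 →ₗ[ℝ] lp (fun _ : ℕ => ℝ) p where
  toFun x := ⟨fun n => (1/2:ℝ)^(n+1) * x n, mem_aux p x⟩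
  map_add' x y := by
    apply lp.ext
    funext n
    show (1/2:ℝ)^(n+1) * (x + y : lp (fun _ : ℕ => ℝ) 1) n = _
    rw [lp.coeFn_add]
    show (1/2:ℝ)^(n+1) * (x n + y n) =
      (1/2:ℝ)^(n+1) * x n + (1/2:ℝ)^(n+1) * y n
    ring
  map_smul' c x := by
    apply lp.ext
    funext n
    show (1/2:ℝ)^(n+1) * (c • x : lp (fun _ : ℕ => ℝ) 1) n = _
    rw [lp.coeFn_smul]
    show (1/2:ℝ)^(n+1) * (c * x n) = c * ((1/2:ℝ)^(n+1) * x n)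
    ring

lemma key_rpow {pr a M : ℝ} (hpr : 1 ≤ pr) (ha : 0 ≤ a) (hM : a ≤ M) :
    a ^ pr ≤ a * M ^ (pr - 1) := by
  rcases eq_or_lt_of_le ha with h0 | h0
  · rw [← h0, Real.zero_rpow (by linarith), zero_mul]
  · have h : a ^ pr = a * a ^ (pr - 1) := by
      calc a ^ pr = a ^ ((1:ℝ) + (pr - 1)) := by rw [show (1:ℝ) + (pr-1) = pr by ring]
        _ = a ^ (1:ℝ) * a ^ (pr - 1) := Real.rpow_add h0 _ _
        _ = a * a ^ (pr - 1) := by rw [Real.rpow_one]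
    rw [h]
    exact mul_le_mul_of_nonneg_left (Real.rpow_le_rpow ha hM (by linarith)) ha

lemma Tl_bound (p : ℝ≥0∞) [Fact (1 ≤ p)] (hp : p ≠ ⊤) (x : lp (fun _ : ℕ => ℝ) 1) :
    ‖Tl p x‖ ≤ 1 * ‖x‖ := by
  have hpr1 : 1 ≤ p.toReal := by
    have h1 : (1:ℝ≥0∞) ≤ p := Fact.out
    simpa using ENNReal.toReal_mono hp h1
  have hpr0 : 0 < p.toReal := lt_of_lt_of_le one_pos hpr1
  rw [one_mul]
  apply lp.norm_le_of_forall_sum_le hpr0 (norm_nonneg x)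
  intro s
  have hxi : ∀ i, ‖(Tl p x) i‖ ≤ ‖x i‖ := fun i => coeff_le (x i) i
  have step1 : ∀ i, ‖(Tl p x) i‖ ^ p.toReal ≤ ‖x i‖ * ‖x‖ ^ (p.toReal - 1) := by
    intro i
    have hle : ‖(Tl p x) i‖ ≤ ‖x‖ :=
      le_trans (hxi i) (lp.norm_apply_le_norm (one_ne_zero : (1:ℝ≥0∞) ≠ 0) x i)
    calc ‖(Tl p x) i‖ ^ p.toReal ≤ ‖(Tl p x) i‖ * ‖x‖ ^ (p.toReal - 1) :=
          key_rpow hpr1 (norm_nonneg _) hle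
      _ ≤ ‖x i‖ * ‖x‖ ^ (p.toReal - 1) :=
          mul_le_mul_of_nonneg_right (hxi i) (Real.rpow_nonneg (norm_nonneg _) _)
  have hsum1 : ∑ i ∈ s, ‖x i‖ ≤ ‖x‖ := by
    have := lp.sum_rpow_le_norm_rpow (by norm_num : (0:ℝ) < (1:ℝ≥0∞).toReal) x s
    simpa using this
  calc ∑ i ∈ s, ‖(Tl p x) i‖ ^ p.toReal
      ≤ ∑ i ∈ s, ‖x i‖ * ‖x‖ ^ (p.toReal - 1) :=
        Finset.sum_le_sum fun i _ => step1 i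
    _ = (∑ i ∈ s, ‖x i‖) * ‖x‖ ^ (p.toReal - 1) := by rw [Finset.sum_mul]
    _ ≤ ‖x‖ * ‖x‖ ^ (p.toReal - 1) :=
        mul_le_mul_of_nonneg_right hsum1 (Real.rpow_nonneg (norm_nonneg _) _)
    _ = ‖x‖ ^ p.toReal := by
        rcases eq_or_lt_of_le (norm_nonneg x) with h0 | h0
        · rw [← h0, zero_mul, Real.zero_rpow hpr0.ne']
        · calc ‖x‖ * ‖x‖ ^ (p.toReal - 1)
              = ‖x‖ ^ (1:ℝ) * ‖x‖ ^ (p.toReal - 1) := by rw [Real.rpow_one]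
            _ = ‖x‖ ^ ((1:ℝ) + (p.toReal - 1)) := (Real.rpow_add h0 _ _).symm
            _ = ‖x‖ ^ p.toReal := by rw [show (1:ℝ) + (p.toReal-1) = p.toReal by ring]

noncomputable def T (p : ℝ≥0∞) [Fact (1 ≤ p)] (hp : p ≠ ⊤) :
    lp (fun _ : ℕ => ℝ) 1 →L[ℝ] lp (fun _ : ℕ => ℝ) p :=
  (Tl p).mkContinuous 1 (Tl_bound p hp)

lemma T_apply (p : ℝ≥0∞) [Fact (1 ≤ p)] (hp : p ≠ ⊤) (x : lp (fun _ : ℕ => ℝ) 1) (n : ℕ) :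
    (T p hp x) n = (1/2:ℝ)^(n+1) * x n := rfl

lemma summable_val (x : lp (fun _ : ℕ => ℝ) 1) : Summable fun n => x n :=
  (summable_coe x).of_norm

noncomputable def Fsum : lp (fun _ : ℕ => ℝ) 1 →L[ℝ] ℝ :=
  LinearMap.mkContinuous
    { toFun := fun x => ∑' n, x n
      map_add' := fun x y => by
        simp only [lp.coeFn_add, Pi.add_apply]
        exact Summable.tsum_add (summable_val x) (summable_val y)
      map_smul' := fun c x => by
        simp only [lp.coeFn_smul, Pi.smul_apply, smul_eq_mul, RingHom.id_apply]
        exact tsum_mul_left }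
    1 (fun x => by
      have h1 : ‖∑' n, x n‖ ≤ ∑' n, ‖x n‖ := norm_tsum_le_tsum_norm (summable_coe x)
      have h2 : ‖x‖ = ∑' n, ‖x n‖ := by
        have := lp.norm_eq_tsum_rpow (by norm_num : (0:ℝ) < (1:ℝ≥0∞).toReal) x
        simpa using this
      simpa [h2] using h1)

lemma geom_tendsto : Tendsto (fun n : ℕ => (1/2:ℝ)^(n+1)) atTop (𝓝 0) := by
  have h : Tendsto (fun n : ℕ => (1/2:ℝ)^n) atTop (𝓝 0) :=
    tendsto_pow_atTop_nhds_zero_of_lt_one (by norm_num) (by norm_num)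
  exact h.comp (tendsto_add_atTop_nat 1)

end Stmt12Aux

theorem stmt12 (p : ℝ≥0∞) [Fact (1 ≤ p)] (hp : p ≠ ⊤) :
    ∃ T : lp (fun _ : ℕ => ℝ) 1 →L[ℝ] lp (fun _ : ℕ => ℝ) p,
      (∀ n : ℕ, T (stdBasis 1 n) = ((1/2 : ℝ) ^ (n + 1)) • stdBasis p n) ∧
      minMod T = 0 ∧
      ¬ AttainsMinMod T ∧
      (∀ n : ℕ, ‖stdBasis 1 n‖ = 1) ∧
      Tendsto (fun n => ‖T (stdBasis 1 n)‖) atTop (𝓝 (minMod T)) ∧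
      ¬ WeaklyNull (stdBasis 1) := by
  have hpr1 : 1 ≤ p.toReal := by
    have h1 : (1:ℝ≥0∞) ≤ p := Fact.out
    simpa using ENNReal.toReal_mono hp h1
  have hpr0 : 0 < p.toReal := lt_of_lt_of_le one_pos hpr1
  have hb1 : ∀ n : ℕ, ‖stdBasis 1 n‖ = 1 := by
    intro n
    have := lp.norm_single (E := fun _ : ℕ => ℝ) (by norm_num : (0:ℝ≥0∞) < 1)
      n (1:ℝ)
    simpa [stdBasis] using this
  have hbp : ∀ n : ℕ, ‖stdBasis p n‖ = 1 := by
    intro n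
    have := lp.norm_single (E := fun _ : ℕ => ℝ) (ENNReal.toReal_pos_iff.mp hpr0).1 n (1:ℝ)
    simpa [stdBasis] using this
  have hT1 : ∀ n : ℕ, Stmt12Aux.T p hp (stdBasis 1 n)
      = ((1/2 : ℝ) ^ (n + 1)) • stdBasis p n := by
    intro n
    apply lp.ext
    funext j
    show (1/2:ℝ)^(j+1) * (stdBasis 1 n) j = ((1/2:ℝ)^(n+1) • stdBasis p n) j
    rw [lp.coeFn_smul]
    show (1/2:ℝ)^(j+1) * (stdBasis 1 n) j = (1/2:ℝ)^(n+1) * (stdBasis p n) j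
    by_cases hj : j = n
    · subst hj
      rw [show (stdBasis 1 j) j = 1 from lp.single_apply_self 1 j 1,
        show (stdBasis p j) j = 1 from lp.single_apply_self p j 1]
    · rw [show (stdBasis 1 n) j = 0 from lp.single_apply_ne 1 n 1 hj,
        show (stdBasis p n) j = 0 from lp.single_apply_ne p n 1 hj]
      ring
  have hTn : ∀ n : ℕ, ‖Stmt12Aux.T p hp (stdBasis 1 n)‖ = (1/2:ℝ)^(n+1) := by
    intro n
    rw [hT1 n, norm_smul, hbp n, mul_one, Real.norm_eq_abs,
      abs_of_nonneg (by positivity)]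
  have hmin : minMod (Stmt12Aux.T p hp) = 0 := by
    have hbdd : BddBelow {r : ℝ | ∃ x : lp (fun _ : ℕ => ℝ) 1,
        ‖x‖ = 1 ∧ ‖Stmt12Aux.T p hp x‖ = r} := by
      refine ⟨0, ?_⟩
      rintro r ⟨x, -, hr⟩
      rw [← hr]
      exact norm_nonneg _
    have hmem : ∀ n : ℕ, ((1/2:ℝ)^(n+1)) ∈ {r : ℝ | ∃ x : lp (fun _ : ℕ => ℝ) 1,
        ‖x‖ = 1 ∧ ‖Stmt12Aux.T p hp x‖ = r} := fun n => ⟨stdBasis 1 n, hb1 n, hTn n⟩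
    apply le_antisymm
    · exact ge_of_tendsto' Stmt12Aux.geom_tendsto (fun n => csInf_le hbdd (hmem n))
    · apply Real.sInf_nonneg
      rintro r ⟨x, -, hr⟩
      rw [← hr]
      exact norm_nonneg _
  refine ⟨Stmt12Aux.T p hp, hT1, hmin, ?_, hb1, ?_, ?_⟩
  · rintro ⟨x, hx1, hx0⟩
    rw [hmin, norm_eq_zero] at hx0
    have hxz : x = 0 := by
      apply lp.ext
      funext n
      have h := congrArg (fun f : lp (fun _ : ℕ => ℝ) p => (f : ℕ → ℝ) n) hx0
      have h' : (1/2:ℝ)^(n+1) * x n = 0 := h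
      have hne : ((1/2:ℝ)^(n+1)) ≠ 0 := by positivity
      have := (mul_eq_zero.mp h').resolve_left hne
      simpa using this
    rw [hxz] at hx1
    simp at hx1
  · rw [hmin]
    simp only [hTn]
    exact Stmt12Aux.geom_tendsto
  · intro hwn
    have h := hwn Stmt12Aux.Fsum
    have hF : ∀ n : ℕ, Stmt12Aux.Fsum (stdBasis 1 n) = 1 := by
      intro n
      show ∑' j, (stdBasis 1 n) j = 1
      have hz : ∀ j, j ≠ n → (stdBasis 1 n) j = 0 := by
        intro j hj
        exact lp.single_apply_ne (E := fun _ : ℕ => ℝ) 1 n 1 hj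
      rw [tsum_eq_single n hz]
      exact lp.single_apply_self (E := fun _ : ℕ => ℝ) 1 n 1
    simp only [hF] at h
    exact one_ne_zero (tendsto_nhds_unique tendsto_const_nhds h)
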